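/- arXiv:2110.14134 — 2 statements merged into one kernel-verified Lean document; each statement's English description precedes it below -/
import Mathlib

section
/- For θ ∈ [0, π/2], let U(θ) := {(x,y) ∈ [0,1]² : x² + y² + 2|cos θ|·√((1−x²)(1−y²)) ≥ 1 + cos²θ}. Then the two-dimensional Lebesgue measure of U(θ) equals (1/2)(π − 3θ)·sin θ − cos θ + 1. -/
open Matrix MeasureTheory Filter Set
open scoped RealInnerProductSpace Kronecker ComplexOrder

noncomputable section

/-- ℝ³ with the Euclidean norm and inner product. -/
abbrev E3 : Type := EuclideanSpace ℝ (Fin 3)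

/-- The Pauli matrices. -/
def pauli1 : Matrix (Fin 2) (Fin 2) ℂ := !![0, 1; 1, 0]
def pauli2 : Matrix (Fin 2) (Fin 2) ℂ := !![0, -Complex.I; Complex.I, 0]
def pauli3 : Matrix (Fin 2) (Fin 2) ℂ := !![1, 0; 0, -1]

/-- The qubit observable `a₀·I + a·σ`. -/
def qObs (a0 : ℝ) (a : E3) : Matrix (Fin 2) (Fin 2) ℂ :=
  (a0 : ℂ) • (1 : Matrix (Fin 2) (Fin 2) ℂ)
    + (a 0 : ℂ) • pauli1 + (a 1 : ℂ) • pauli2 + (a 2 : ℂ) • pauli3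

/-- A density matrix: positive semidefinite with trace one. -/
def IsDensityMatrix {n : Type*} [Fintype n] (ρ : Matrix n n ℂ) : Prop :=
  ρ.PosSemidef ∧ ρ.trace = 1

/-- Mean value `⟨M⟩_ρ = Tr(Mρ)` of an observable `M` in the state `ρ`. -/
def mean {n : Type*} [Fintype n] (M ρ : Matrix n n ℂ) : ℝ :=
  (Matrix.trace (M * ρ)).re

/-- Variance `(Δ_ρ M)² = Tr(M²ρ) − (Tr(Mρ))²`. -/
def variance {n : Type*} [Fintype n] (M ρ : Matrix n n ℂ) : ℝ :=
  (Matrix.trace (M * M * ρ)).re - (mean M ρ) ^ 2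

/-- Uncertainty `Δ_ρ M` (standard deviation). -/
def uncertainty {n : Type*} [Fintype n] (M ρ : Matrix n n ℂ) : ℝ :=
  Real.sqrt (variance M ρ)

/-- Gram matrix of a tuple of vectors in ℝ³. -/
def gram {m : ℕ} (v : Fin m → E3) : Matrix (Fin m) (Fin m) ℝ :=
  Matrix.of fun i j => (inner ℝ (v i) (v j) : ℝ)

lemma gram_isHermitian {m : ℕ} (v : Fin m → E3) : (gram v).IsHermitian := by
  ext i j
  simp [_root_.gram, Matrix.conjTranspose_apply, real_inner_comm]

/-- Smallest eigenvalue of the Gram matrix. -/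
def lamMin {m : ℕ} (v : Fin m → E3) : ℝ := ⨅ i, (gram_isHermitian v).eigenvalues i

/-- Largest eigenvalue of the Gram matrix. -/
def lamMax {m : ℕ} (v : Fin m → E3) : ℝ := ⨆ i, (gram_isHermitian v).eigenvalues i

open Real intervalIntegral


private lemma le_iff_sq (a b : ℝ) (ha : 0 ≤ a) (hb : 0 ≤ b) : a ≤ b ↔ a^2 ≤ b^2 :=
  (pow_le_pow_iff_left₀ ha hb two_ne_zero).symm

set_option maxHeartbeats 1000000 in
private lemma key_equiv (c s x y : ℝ) (hc : 0 ≤ c) (hs : 0 ≤ s)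
    (hcs : c^2 + s^2 = 1) (hx : x ∈ Icc (0:ℝ) 1) (hy : y ∈ Icc (0:ℝ) 1) :
    (x^2 + y^2 + 2*c*Real.sqrt ((1-x^2)*(1-y^2)) ≥ 1 + c^2) ↔
    (|c*x - s*Real.sqrt (1-x^2)| ≤ y ∧ (x ≤ c → y ≤ c*x + s*Real.sqrt (1-x^2))) := by
  obtain ⟨hx0, hx1⟩ := hx
  obtain ⟨hy0, hy1⟩ := hy
  have h1x : (0:ℝ) ≤ 1 - x^2 := by nlinarith
  have h1y : (0:ℝ) ≤ 1 - y^2 := by nlinarith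
  set u := Real.sqrt (1 - x^2) with hu
  set v := Real.sqrt (1 - y^2) with hv
  have hu0 : 0 ≤ u := Real.sqrt_nonneg _
  have hv0 : 0 ≤ v := Real.sqrt_nonneg _
  have hu2 : u^2 = 1 - x^2 := Real.sq_sqrt h1x
  have hv2 : v^2 = 1 - y^2 := Real.sq_sqrt h1y
  have huv : Real.sqrt ((1-x^2)*(1-y^2)) = u * v := Real.sqrt_mul h1x _
  rw [huv]
  have key1 : (c*x + s*u)^2 + (c*u - s*x)^2 = y^2 + v^2 := by
    linear_combination (x^2 + u^2) * hcs + hu2 - hv2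
  have key2 : (c*u + s*x)^2 + (c*x - s*u)^2 = v^2 + y^2 := by
    linear_combination (x^2 + u^2) * hcs + hu2 - hv2
  have keyA : (s*x)^2 - (v - c*u)^2 = x^2 + y^2 + 2*c*(u*v) - (1 + c^2) := by
    linear_combination x^2 * hcs - hv2 - c^2 * hu2
  have stepA : (x^2 + y^2 + 2*c*(u*v) ≥ 1 + c^2) ↔ (v - c*u)^2 ≤ (s*x)^2 := by
    constructor <;> intro h <;> linarith
  have stepC : v ≤ c*u + s*x ↔ |c*x - s*u| ≤ y := by
    rw [le_iff_sq v _ hv0 (by positivity), le_iff_sq _ y (abs_nonneg _) hy0, sq_abs]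
    constructor <;> intro h <;> linarith
  have stepD : c*u - s*x ≤ v ↔ (x ≤ c → y ≤ c*x + s*u) := by
    by_cases hxc : x ≤ c
    · have hsxcu : s*x ≤ c*u := by
        rw [le_iff_sq _ _ (by positivity) (by positivity)]
        have h2 : x^2 ≤ c^2 := by nlinarith
        have key : (c*u)^2 - (s*x)^2 = c^2 - x^2 := by
          linear_combination c^2 * hu2 - x^2 * hcs
        linarith
      have h0 : 0 ≤ c*u - s*x := by linarith
      rw [le_iff_sq _ _ h0 hv0]
      simp only [hxc, forall_const]
      rw [le_iff_sq y _ hy0 (by positivity)]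
      constructor <;> intro h <;> linarith
    · have hcux : c*u ≤ s*x := by
        rw [le_iff_sq _ _ (by positivity) (by positivity)]
        have h2 : c^2 ≤ x^2 := by nlinarith [le_of_not_ge hxc]
        have key : (s*x)^2 - (c*u)^2 = x^2 - c^2 := by
          linear_combination x^2 * hcs - c^2 * hu2
        linarith
      constructor
      · intro _ _; exact absurd ‹x ≤ c› hxc
      · intro _; linarith
  rw [stepA]
  constructor
  · intro h
    have habs := abs_le_of_sq_le_sq' h (by positivity)
    exact ⟨stepC.mp (by linarith [habs.2]), stepD.mp (by linarith [habs.1])⟩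
  · rintro ⟨h1, h2⟩
    have hC := stepC.mpr h1
    have hD := stepD.mpr h2
    exact sq_le_sq' (by linarith) (by linarith)

private lemma integral_sqrt_one_sub_sq'' {a b : ℝ} (ha : a ∈ Icc (-(π/2)) (π/2))
    (hb : b ∈ Icc (-(π/2)) (π/2)) :
    ∫ x in Real.sin a..Real.sin b, Real.sqrt (1 - x^2) =
      (Real.cos b * Real.sin b - Real.cos a * Real.sin a + b - a) / 2 := by
  have h1 : ∫ x in Real.sin a..Real.sin b, Real.sqrt (1 - x^2)
      = ∫ x in a..b, Real.sqrt (1 - Real.sin x ^ 2) * Real.cos x :=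
    (integral_comp_mul_deriv (fun x _ => Real.hasDerivAt_sin x) Real.continuousOn_cos
      (by fun_prop)).symm
  have h2 : ∫ x in a..b, Real.sqrt (1 - Real.sin x ^ 2) * Real.cos x
      = ∫ x in a..b, Real.cos x ^ 2 := by
    refine integral_congr fun x hx => ?_
    have hx' : x ∈ Icc (-(π/2)) (π/2) := by
      rcases le_total a b with h | h
      · rw [uIcc_of_le h] at hx; exact ⟨le_trans ha.1 hx.1, le_trans hx.2 hb.2⟩
      · rw [uIcc_of_ge h] at hx; exact ⟨le_trans hb.1 hx.1, le_trans hx.2 ha.2⟩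
    rw [← Real.cos_eq_sqrt_one_sub_sin_sq hx'.1 hx'.2, pow_two]
  rw [h1, h2, integral_cos_sq]


set_option maxHeartbeats 1000000 in
/-- the area of the uncertainty region U(θ). -/
theorem volume_uncertainty_region (θ : ℝ) (hθ : θ ∈ Set.Icc 0 (Real.pi / 2)) :
    MeasureTheory.volume
        {p : ℝ × ℝ | p.1 ∈ Set.Icc (0 : ℝ) 1 ∧ p.2 ∈ Set.Icc (0 : ℝ) 1 ∧
          p.1 ^ 2 + p.2 ^ 2
              + 2 * |Real.cos θ| * Real.sqrt ((1 - p.1 ^ 2) * (1 - p.2 ^ 2))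
            ≥ 1 + Real.cos θ ^ 2} =
      ENNReal.ofReal ((1 / 2) * (Real.pi - 3 * θ) * Real.sin θ - Real.cos θ + 1) := by
  obtain ⟨hθ0, hθ2⟩ := hθ
  set c := Real.cos θ with hcdef
  set s := Real.sin θ with hsdef
  have hc : 0 ≤ c := Real.cos_nonneg_of_mem_Icc ⟨by linarith, hθ2⟩
  have hs : 0 ≤ s := Real.sin_nonneg_of_nonneg_of_le_pi hθ0 (by linarith [Real.pi_pos])
  have hc1 : c ≤ 1 := Real.cos_le_one θ
  have hs1 : s ≤ 1 := Real.sin_le_one θ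
  have hcs : c^2 + s^2 = 1 := by rw [hcdef, hsdef]; exact Real.cos_sq_add_sin_sq θ
  have habs : |c| = c := abs_of_nonneg hc
  have hsc : Real.sqrt (1 - c^2) = s := by
    rw [show (1:ℝ) - c^2 = s^2 by linarith]; exact Real.sqrt_sq hs
  have hcs' : Real.sqrt (1 - s^2) = c := by
    rw [show (1:ℝ) - s^2 = c^2 by linarith]; exact Real.sqrt_sq hc
  simp only [habs]
  set g : ℝ → ℝ := fun x => |c*x - s*Real.sqrt (1-x^2)| with hgdef
  set h : ℝ → ℝ := fun x => if x ≤ c then c*x + s*Real.sqrt (1-x^2) else 1 with hhdef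
  -- basic pointwise facts on [0,1]
  have hu0 : ∀ x : ℝ, 0 ≤ Real.sqrt (1-x^2) := fun x => Real.sqrt_nonneg _
  have hu2 : ∀ x ∈ Icc (0:ℝ) 1, Real.sqrt (1-x^2)^2 = 1 - x^2 := fun x hx =>
    Real.sq_sqrt (by nlinarith [hx.1, hx.2])
  have hg0 : ∀ x, 0 ≤ g x := fun x => abs_nonneg _
  have hh1 : ∀ x ∈ Icc (0:ℝ) 1, h x ≤ 1 := by
    intro x hx
    rw [hhdef]
    dsimp only
    split_ifs with hxc
    · have key : (c*x + s*Real.sqrt (1-x^2))^2 + (c*Real.sqrt (1-x^2) - s*x)^2 = 1 := by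
        linear_combination (x^2 + Real.sqrt (1-x^2)^2) * hcs + hu2 x hx
      have := sq_nonneg (c*Real.sqrt (1-x^2) - s*x)
      have h1 : (c*x + s*Real.sqrt (1-x^2))^2 ≤ 1^2 := by nlinarith
      exact le_of_sq_le_sq h1 zero_le_one
    · exact le_refl 1
  have hh0 : ∀ x ∈ Icc (0:ℝ) 1, 0 ≤ h x := by
    intro x hx
    rw [hhdef]; dsimp only
    split_ifs with hxc
    · exact add_nonneg (mul_nonneg hc hx.1) (mul_nonneg hs (hu0 x))
    · exact zero_le_one
  have hgh : ∀ x ∈ Icc (0:ℝ) 1, g x ≤ h x := by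
    intro x hx
    rw [hgdef, hhdef]; dsimp only
    split_ifs with hxc
    · rw [abs_le]
      constructor
      · have := hu0 x; nlinarith [mul_nonneg hs (hu0 x), mul_nonneg hc hx.1]
      · nlinarith [mul_nonneg hs (hu0 x)]
    · have key : (c*x - s*Real.sqrt (1-x^2))^2 + (c*Real.sqrt (1-x^2) + s*x)^2 = 1 := by
        linear_combination (x^2 + Real.sqrt (1-x^2)^2) * hcs + hu2 x hx
      have h1 : (c*x - s*Real.sqrt (1-x^2))^2 ≤ 1^2 := by nlinarith [sq_nonneg (c*Real.sqrt (1-x^2) + s*x)]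
      exact abs_le_of_sq_le_sq (by simpa using h1) zero_le_one
  -- measurability of the set
  have hFcont : Continuous (fun p : ℝ × ℝ =>
      p.1 ^ 2 + p.2 ^ 2 + 2 * c * Real.sqrt ((1 - p.1 ^ 2) * (1 - p.2 ^ 2))) := by fun_prop
  set S := {p : ℝ × ℝ | p.1 ∈ Icc (0:ℝ) 1 ∧ p.2 ∈ Icc (0:ℝ) 1 ∧
      p.1 ^ 2 + p.2 ^ 2 + 2 * c * Real.sqrt ((1 - p.1 ^ 2) * (1 - p.2 ^ 2))
        ≥ 1 + c ^ 2} with hSdef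
  have hS : MeasurableSet S := by
    have : S = (Icc (0:ℝ) 1 ×ˢ Icc (0:ℝ) 1) ∩
        (fun p : ℝ × ℝ => p.1 ^ 2 + p.2 ^ 2 + 2 * c * Real.sqrt ((1 - p.1 ^ 2) * (1 - p.2 ^ 2)))
          ⁻¹' (Ici (1 + c ^ 2)) := by
      ext p
      simp only [hSdef, Set.mem_setOf_eq, Set.mem_inter_iff, Set.mem_prod, Set.mem_preimage,
        Set.mem_Ici, ge_iff_le, and_assoc]
    rw [this]
    exact (measurableSet_Icc.prod measurableSet_Icc).inter
      (hFcont.measurable measurableSet_Ici)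
  rw [Measure.volume_eq_prod, Measure.prod_apply hS]
  have hsect : (fun x => volume (Prod.mk x ⁻¹' S)) =
      (Icc (0:ℝ) 1).indicator (fun x => ENNReal.ofReal (h x - g x)) := by
    funext x
    by_cases hx : x ∈ Icc (0:ℝ) 1
    · rw [Set.indicator_of_mem hx]
      have hpre : Prod.mk x ⁻¹' S = Icc (g x) (h x) := by
        ext y
        simp only [hSdef, Set.mem_preimage, Set.mem_setOf_eq, Set.mem_Icc]
        constructor
        · rintro ⟨-, hy, hcond⟩
          have hk := (key_equiv c s x y hc hs hcs hx hy).mp hcond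
          refine ⟨hk.1, ?_⟩
          rw [hhdef]; dsimp only
          split_ifs with hxc
          · exact hk.2 hxc
          · exact hy.2
        · rintro ⟨h1, h2⟩
          have hy : y ∈ Icc (0:ℝ) 1 := ⟨le_trans (hg0 x) h1, le_trans h2 (hh1 x hx)⟩
          refine ⟨hx, hy, ?_⟩
          refine (key_equiv c s x y hc hs hcs hx hy).mpr ⟨h1, fun hxc => ?_⟩
          rw [hhdef] at h2; simp only [if_pos hxc] at h2
          exact h2
      rw [hpre, Real.volume_Icc]
    · rw [Set.indicator_of_notMem hx]
      have hpre : Prod.mk x ⁻¹' S = ∅ := by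
        ext y
        simp only [hSdef, Set.mem_preimage, Set.mem_setOf_eq, Set.mem_empty_iff_false,
          iff_false]
        rintro ⟨hx', -⟩
        exact hx hx'
      simp [hpre]
  rw [hsect, lintegral_indicator measurableSet_Icc]
  -- integrability
  have hgcont : Continuous g := by
    rw [hgdef]; fun_prop
  have hgInt : IntegrableOn g (Icc (0:ℝ) 1) := hgcont.integrableOn_Icc
  have hhmeas : Measurable h := by
    rw [hhdef]
    exact Measurable.ite measurableSet_Iic (by fun_prop) measurable_const
  have hhInt : IntegrableOn h (Icc (0:ℝ) 1) := by
    refine Measure.integrableOn_of_bounded (by simp) hhmeas.aestronglyMeasurable (M := 1) ?_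
    refine (ae_restrict_iff' measurableSet_Icc).2 (ae_of_all _ fun x hx => ?_)
    rw [Real.norm_eq_abs, abs_of_nonneg (hh0 x hx)]
    exact hh1 x hx
  have hInt : IntegrableOn (fun x => h x - g x) (Icc (0:ℝ) 1) := hhInt.sub hgInt
  have hnn : 0 ≤ᵐ[volume.restrict (Icc (0:ℝ) 1)] (fun x => h x - g x) :=
    (ae_restrict_iff' measurableSet_Icc).2 (ae_of_all _ fun x hx => sub_nonneg.2 (hgh x hx))
  rw [← ofReal_integral_eq_lintegral_ofReal hInt hnn]
  congr 1
  rw [MeasureTheory.integral_Icc_eq_integral_Ioc, ← intervalIntegral.integral_of_le zero_le_one]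
  have hsqcont : Continuous (fun x : ℝ => Real.sqrt (1-x^2)) := by fun_prop
  have hhII : IntervalIntegrable h volume 0 1 :=
    (intervalIntegrable_iff_integrableOn_Icc_of_le zero_le_one).2 hhInt
  have hgII : IntervalIntegrable g volume 0 1 := hgcont.intervalIntegrable _ _
  rw [intervalIntegral.integral_sub hhII hgII]
  -- the three sqrt integrals
  have hpi := Real.pi_pos
  have hmem0 : (0:ℝ) ∈ Icc (-(π/2)) (π/2) := ⟨by linarith, by linarith⟩
  have hmemθ : θ ∈ Icc (-(π/2)) (π/2) := ⟨by linarith, hθ2⟩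
  have hmemθ' : π/2 - θ ∈ Icc (-(π/2)) (π/2) := ⟨by linarith, by linarith⟩
  have hmemπ : π/2 ∈ Icc (-(π/2)) (π/2) := ⟨by linarith, le_refl _⟩
  have I1 : ∫ x in (0:ℝ)..c, Real.sqrt (1-x^2) = (s*c + (π/2 - θ))/2 := by
    have hI := integral_sqrt_one_sub_sq'' hmem0 hmemθ'
    rw [Real.sin_zero, Real.cos_zero, Real.sin_pi_div_two_sub, Real.cos_pi_div_two_sub,
      ← hcdef, ← hsdef] at hI
    rw [hI]; ring
  have I2 : ∫ x in (0:ℝ)..s, Real.sqrt (1-x^2) = (c*s + θ)/2 := by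
    have hI := integral_sqrt_one_sub_sq'' hmem0 hmemθ
    rw [Real.sin_zero, Real.cos_zero, ← hcdef, ← hsdef] at hI
    rw [hI]; ring
  have I3 : ∫ x in s..(1:ℝ), Real.sqrt (1-x^2) = (π/2 - θ - c*s)/2 := by
    have hI := integral_sqrt_one_sub_sq'' hmemθ hmemπ
    rw [Real.sin_pi_div_two, Real.cos_pi_div_two, ← hcdef, ← hsdef] at hI
    rw [hI]; ring
  -- compute ∫ h
  have hII1 : IntervalIntegrable h volume 0 c := hhII.mono_set
    (by rw [uIcc_of_le hc, uIcc_of_le zero_le_one]; exact Icc_subset_Icc le_rfl hc1)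
  have hII2 : IntervalIntegrable h volume c 1 := hhII.mono_set
    (by rw [uIcc_of_le hc1, uIcc_of_le zero_le_one]; exact Icc_subset_Icc hc le_rfl)
  have Vh : ∫ x in (0:ℝ)..1, h x = c*(c^2/2) + s*((s*c + (π/2 - θ))/2) + (1 - c) := by
    rw [← integral_add_adjacent_intervals hII1 hII2]
    have e1 : ∫ x in (0:ℝ)..c, h x
        = ∫ x in (0:ℝ)..c, (c*x + s*Real.sqrt (1-x^2)) := by
      refine integral_congr fun x hx => ?_
      rw [uIcc_of_le hc] at hx
      rw [hhdef]; exact if_pos hx.2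
    have e2 : ∫ x in c..(1:ℝ), h x = ∫ x in c..(1:ℝ), (1:ℝ) := by
      refine integral_congr fun x hx => ?_
      rw [uIcc_of_le hc1] at hx
      rw [hhdef]; dsimp only
      split_ifs with hxc
      · have hxeq : x = c := le_antisymm hxc hx.1
        rw [hxeq, hsc]; linear_combination hcs
      · rfl
    rw [e1, e2, intervalIntegral.integral_add
        ((by fun_prop : Continuous fun x : ℝ => c*x).intervalIntegrable _ _)
        ((by fun_prop : Continuous fun x : ℝ => s*Real.sqrt (1-x^2)).intervalIntegrable _ _),
      intervalIntegral.integral_const_mul, intervalIntegral.integral_const_mul,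
      integral_id, I1, integral_one]
    ring
  -- compute ∫ g
  have Vg : ∫ x in (0:ℝ)..1, g x
      = (s*((c*s + θ)/2) - c*(s^2/2)) + (c*((1 - s^2)/2) - s*((π/2 - θ - c*s)/2)) := by
    rw [← integral_add_adjacent_intervals (hgcont.intervalIntegrable 0 s)
      (hgcont.intervalIntegrable s 1)]
    have e3 : ∫ x in (0:ℝ)..s, g x
        = ∫ x in (0:ℝ)..s, (s*Real.sqrt (1-x^2) - c*x) := by
      refine integral_congr fun x hx => ?_
      rw [uIcc_of_le hs] at hx
      have hx01 : x ∈ Icc (0:ℝ) 1 := ⟨hx.1, le_trans hx.2 hs1⟩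
      have hexp : (s*Real.sqrt (1-x^2))^2 = s^2*(1-x^2) := by
        rw [mul_pow, hu2 x hx01]
      have hle : c*x ≤ s*Real.sqrt (1-x^2) := by
        rw [le_iff_sq _ _ (mul_nonneg hc hx.1) (mul_nonneg hs (hu0 x)), hexp]
        nlinarith [hx.2, hx.1, hcs]
      rw [hgdef]; dsimp only
      rw [abs_of_nonpos (by linarith)]; ring
    have e4 : ∫ x in s..(1:ℝ), g x
        = ∫ x in s..(1:ℝ), (c*x - s*Real.sqrt (1-x^2)) := by
      refine integral_congr fun x hx => ?_
      rw [uIcc_of_le hs1] at hx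
      have hx01 : x ∈ Icc (0:ℝ) 1 := ⟨le_trans hs hx.1, hx.2⟩
      have hexp : (s*Real.sqrt (1-x^2))^2 = s^2*(1-x^2) := by
        rw [mul_pow, hu2 x hx01]
      have hle : s*Real.sqrt (1-x^2) ≤ c*x := by
        rw [le_iff_sq _ _ (mul_nonneg hs (hu0 x)) (mul_nonneg hc hx01.1), hexp]
        nlinarith [hx.1, hx01.1, hcs]
      rw [hgdef]; dsimp only
      rw [abs_of_nonneg (by linarith)]
    rw [e3, e4,
      intervalIntegral.integral_sub ((by fun_prop : Continuous fun x : ℝ => s*Real.sqrt (1-x^2)).intervalIntegrable _ _)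
        ((by fun_prop : Continuous fun x : ℝ => c*x).intervalIntegrable _ _),
      intervalIntegral.integral_sub ((by fun_prop : Continuous fun x : ℝ => c*x).intervalIntegrable _ _)
        ((by fun_prop : Continuous fun x : ℝ => s*Real.sqrt (1-x^2)).intervalIntegrable _ _),
      intervalIntegral.integral_const_mul, intervalIntegral.integral_const_mul,
      intervalIntegral.integral_const_mul, intervalIntegral.integral_const_mul,
      integral_id, integral_id, I2, I3]
    ring
  rw [Vh, Vg]
  linear_combination (c/2) * hcs


end
end

section
/- Let A = a₀·I + a·σ, B = b₀·I + b·σ, C = c₀·I + c·σ be qubit observables with {a,b,c} linearly independent in ℝ³. Then the infimum over all qubit density matrices ρ of (Δ_ρA)² + (Δ_ρB)² + (Δ_ρC)² equals Tr(T_{a,b,c}) − λ_max(T_{a,b,c}), and this infimum is attained by some qubit density matrix. -/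
open Matrix MeasureTheory Filter Set
open scoped RealInnerProductSpace Kronecker ComplexOrder

noncomputable section

/-! ### Auxiliary lemmas -/

def rhoForm (x y z : ℝ) : Matrix (Fin 2) (Fin 2) ℂ :=
  (1/2 : ℂ) • !![1 + (z:ℂ), (x:ℂ) - (y:ℂ)*Complex.I; (x:ℂ) + (y:ℂ)*Complex.I, 1 - (z:ℂ)]

lemma varianceA (a0 : ℝ) (a : E3) (x y z : ℝ) :
    variance (qObs a0 a) (rhoForm x y z)
      = (a 0 ^ 2 + a 1 ^ 2 + a 2 ^ 2) - (a 0 * x + a 1 * y + a 2 * z) ^ 2 := by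
  simp only [variance, mean, qObs, rhoForm, pauli1, pauli2, pauli3, Matrix.trace,
    Matrix.diag, Fin.sum_univ_two, Matrix.mul_apply, Fin.sum_univ_succ, Fin.sum_univ_zero,
    Matrix.add_apply, Matrix.smul_apply, Matrix.one_apply, Matrix.cons_val', Matrix.cons_val_zero,
    Matrix.cons_val_one, Matrix.head_cons, Matrix.head_fin_const, Matrix.empty_val',
    Matrix.cons_val_fin_one, smul_eq_mul, Matrix.of_apply]
  simp only [Complex.add_re, Complex.mul_re, Complex.mul_im, Complex.add_im, Complex.ofReal_re,
    Complex.ofReal_im, Complex.I_re, Complex.I_im, Complex.one_re, Complex.one_im,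
    Complex.sub_re, Complex.sub_im, Complex.neg_re, Complex.neg_im, Complex.div_re,
    Complex.div_im, Complex.normSq, MonoidWithZeroHom.coe_mk, ZeroHom.coe_mk]
  norm_num
  ring

lemma rho_eq_form (ρ : Matrix (Fin 2) (Fin 2) ℂ) (hρ : ρ.PosSemidef) (ht : ρ.trace = 1) :
    ∃ x y z : ℝ, x^2 + y^2 + z^2 ≤ 1 ∧ ρ = rhoForm x y z := by
  have hH := hρ.isHermitian
  have h10 : ρ 1 0 = starRingEnd ℂ (ρ 0 1) := by
    have := congrFun (congrFun hH.eq 1) 0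
    simpa [Matrix.conjTranspose_apply] using this.symm
  have h00 : (ρ 0 0).im = 0 := by
    have := congrFun (congrFun hH.eq 0) 0
    have := congrArg Complex.im this
    simp [Matrix.conjTranspose_apply] at this
    linarith
  have h11 : (ρ 1 1).im = 0 := by
    have := congrFun (congrFun hH.eq 1) 1
    have := congrArg Complex.im this
    simp [Matrix.conjTranspose_apply] at this
    linarith
  have htr : (ρ 0 0).re + (ρ 1 1).re = 1 := by
    have := congrArg Complex.re ht
    simpa [Matrix.trace, Fin.sum_univ_two] using this
  have hdet : 0 ≤ (ρ.det).re ∧ (ρ.det).im = 0 := by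
    rw [hH.det_eq_prod_eigenvalues]
    constructor
    · have : (0:ℝ) ≤ ∏ i, hH.eigenvalues i := Finset.prod_nonneg fun i _ => hρ.eigenvalues_nonneg i
      simpa [Fin.prod_univ_two] using this
    · simp
  have hdet2 : ρ.det = ρ 0 0 * ρ 1 1 - ρ 0 1 * ρ 1 0 := Matrix.det_fin_two ρ
  have hkey : (ρ 0 1).re^2 + (ρ 0 1).im^2 ≤ (ρ 0 0).re * (ρ 1 1).re := by
    have := hdet.1
    rw [hdet2] at this
    simp only [Complex.sub_re, Complex.mul_re, h10, Complex.conj_re, Complex.conj_im, h00, h11] at this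
    nlinarith [this]
  refine ⟨2*(ρ 0 1).re, -2*(ρ 0 1).im, (ρ 0 0).re - (ρ 1 1).re, by nlinarith, ?_⟩
  ext i j
  fin_cases i <;> fin_cases j <;>
    · apply Complex.ext <;>
      simp [rhoForm, h10, Complex.ext_iff, h00, h11] <;> ring_nf <;> linarith

lemma rhoForm_trace (x y z : ℝ) : (rhoForm x y z).trace = 1 := by
  simp [rhoForm, Matrix.trace, Fin.sum_univ_two]
  ring

lemma rhoForm_isHermitian (x y z : ℝ) : (rhoForm x y z).IsHermitian := by
  ext i j
  fin_cases i <;> fin_cases j <;>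
    simp [rhoForm, Matrix.conjTranspose_apply, Complex.ext_iff]

lemma rhoForm_posSemidef (x y z : ℝ) (h : x^2 + y^2 + z^2 = 1) :
    (rhoForm x y z).PosSemidef := by
  have hsq : rhoForm x y z * rhoForm x y z = rhoForm x y z := by
    ext i j
    fin_cases i <;> fin_cases j <;>
      simp [rhoForm, Matrix.mul_apply, Fin.sum_univ_two, Complex.ext_iff] <;>
      (ring_nf; constructor <;> first | trivial | nlinarith)
  have : rhoForm x y z = (rhoForm x y z)ᴴ * rhoForm x y z := by
    rw [(rhoForm_isHermitian x y z).eq, hsq]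
  rw [this]
  exact Matrix.posSemidef_conjTranspose_mul_self _

lemma quad_form_le {m : ℕ} (G : Matrix (Fin m) (Fin m) ℝ) (hG : G.IsHermitian) (lam : ℝ)
    (hlam : ∀ i, hG.eigenvalues i ≤ lam) (w : Fin m → ℝ) :
    w ⬝ᵥ G *ᵥ w ≤ lam * (w ⬝ᵥ w) := by
  set B := hG.eigenvectorBasis with hB
  set f : Fin m → Fin m → ℝ := fun i => (WithLp.equiv 2 _) (B i) with hf
  have hinner : ∀ (x y : Fin m → ℝ),
      (inner ℝ ((WithLp.equiv 2 (Fin m → ℝ)).symm x) ((WithLp.equiv 2 (Fin m → ℝ)).symm y) : ℝ)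
        = x ⬝ᵥ y := by
    intro x y
    simp [PiLp.inner_apply, RCLike.inner_apply, dotProduct, mul_comm]
  have hGt : Gᵀ = G := by
    ext i j
    have := congrFun (congrFun hG.eq i) j
    simpa [Matrix.conjTranspose_apply] using this
  have hsym : ∀ (x y : Fin m → ℝ), x ⬝ᵥ G *ᵥ y = (G *ᵥ x) ⬝ᵥ y := by
    intro x y
    rw [dotProduct_mulVec, ← Matrix.mulVec_transpose, hGt]
  have hBval : ∀ i, G *ᵥ f i = hG.eigenvalues i • f i := fun i => hG.mulVec_eigenvectorBasis i
  have hexp : ∀ (x y : Fin m → ℝ), ∑ i, (x ⬝ᵥ f i) * (f i ⬝ᵥ y) = x ⬝ᵥ y := by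
    intro x y
    have := B.sum_inner_mul_inner ((WithLp.equiv 2 (Fin m → ℝ)).symm x)
      ((WithLp.equiv 2 (Fin m → ℝ)).symm y)
    rw [← hinner x y, ← this]
    refine Finset.sum_congr rfl fun i _ => ?_
    rw [← hinner x (f i), ← hinner (f i) y, hf]
    simp only [Equiv.symm_apply_apply]
  have hq : w ⬝ᵥ G *ᵥ w = ∑ i, hG.eigenvalues i * ((w ⬝ᵥ f i) * (f i ⬝ᵥ w)) := by
    rw [← hexp w (G *ᵥ w)]
    congr 1
    funext i
    have : f i ⬝ᵥ (G *ᵥ w) = hG.eigenvalues i * (f i ⬝ᵥ w) := by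
      rw [hsym (f i) w, hBval i, smul_dotProduct]
      simp [smul_eq_mul]
    rw [this]; ring
  have hww : w ⬝ᵥ w = ∑ i, (w ⬝ᵥ f i) * (f i ⬝ᵥ w) := (hexp w w).symm
  have hdotcomm : ∀ i, f i ⬝ᵥ w = w ⬝ᵥ f i := fun i => dotProduct_comm _ _
  rw [hq, hww, Finset.mul_sum]
  apply Finset.sum_le_sum
  intro i _
  have : 0 ≤ (w ⬝ᵥ f i) * (f i ⬝ᵥ w) := by rw [hdotcomm i]; exact mul_self_nonneg _
  exact mul_le_mul_of_nonneg_right (hlam i) this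

lemma exists_top_eigenvector {m : ℕ} (G : Matrix (Fin m) (Fin m) ℝ) (hG : G.IsHermitian)
    [NeZero m] :
    ∃ (lam : ℝ) (w : Fin m → ℝ), lam = ⨆ i, hG.eigenvalues i ∧
      G *ᵥ w = lam • w ∧ w ⬝ᵥ w = 1 := by
  obtain ⟨i0, hi0⟩ := Finite.exists_max hG.eigenvalues
  have hsup : hG.eigenvalues i0 = ⨆ i, hG.eigenvalues i := by
    apply le_antisymm
    · exact le_ciSup (Set.Finite.bddAbove (Set.finite_range _)) i0
    · exact ciSup_le hi0
  refine ⟨hG.eigenvalues i0, (WithLp.equiv 2 _) (hG.eigenvectorBasis i0), hsup,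
    hG.mulVec_eigenvectorBasis i0, ?_⟩
  have := hG.eigenvectorBasis.orthonormal.1 i0
  have h2 : (inner ℝ (hG.eigenvectorBasis i0) (hG.eigenvectorBasis i0) : ℝ) = 1 := by
    rw [real_inner_self_eq_norm_mul_norm, this, one_mul]
  simp only [PiLp.inner_apply, RCLike.inner_apply, conj_trivial] at h2
  simpa [PiLp.inner_apply, RCLike.inner_apply, dotProduct] using h2

lemma gram_mulVec {m : ℕ} (v : Fin m → E3) (w : Fin m → ℝ) (i : Fin m) :
    ((gram v) *ᵥ w) i = ⟪v i, ∑ j, w j • v j⟫ := by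
  simp only [_root_.gram, Matrix.mulVec, dotProduct, inner_sum, real_inner_smul_right,
    Matrix.of_apply, PiLp.inner_apply, RCLike.inner_apply, starRingEnd_apply, star_trivial]
  refine Finset.sum_congr rfl fun j _ => ?_
  rw [Finset.sum_mul]
  refine Finset.sum_congr rfl fun k _ => ?_
  simp only [PiLp.smul_apply, smul_eq_mul]
  ring

lemma dot_gram {m : ℕ} (v : Fin m → E3) (w : Fin m → ℝ) :
    w ⬝ᵥ ((gram v) *ᵥ w) = ⟪∑ j, w j • v j, ∑ j, w j • v j⟫ := by
  simp only [dotProduct, gram_mulVec]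
  rw [sum_inner]
  refine Finset.sum_congr rfl fun i _ => ?_
  rw [real_inner_smul_left]

lemma lamMax_nonneg {m : ℕ} (v : Fin m → E3) [NeZero m] : 0 ≤ lamMax v := by
  obtain ⟨lam, w, hlam, hev, hunit⟩ := exists_top_eigenvector (gram v) (gram_isHermitian v)
  have h1 : w ⬝ᵥ ((gram v) *ᵥ w) = lam := by
    rw [hev, dotProduct_smul, smul_eq_mul, hunit, mul_one]
  have h2 := dot_gram v w
  rw [h1] at h2
  rw [lamMax, ← hlam, h2]
  exact real_inner_self_nonneg

lemma sum_inner_sq_le {m : ℕ} (v : Fin m → E3) [NeZero m] (r : E3) (hr : ⟪r, r⟫ ≤ 1) :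
    ∑ i, ⟪v i, r⟫ ^ 2 ≤ lamMax v := by
  set w : Fin m → ℝ := fun i => ⟪v i, r⟫ with hw
  set S : ℝ := ∑ i, w i ^ 2 with hS
  set u : E3 := ∑ j, w j • v j with hu
  have hru : ⟪r, u⟫ = S := by
    rw [hu, inner_sum, hS]
    refine Finset.sum_congr rfl fun i _ => ?_
    rw [real_inner_smul_right, real_inner_comm]
    ring
  have hcs : ⟪r, u⟫ * ⟪r, u⟫ ≤ ⟪r, r⟫ * ⟪u, u⟫ := real_inner_mul_inner_self_le r u
  have huu : ⟪u, u⟫ ≤ lamMax v * S := by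
    have h1 := quad_form_le (gram v) (gram_isHermitian v) (lamMax v)
      (fun i => le_ciSup (Set.Finite.bddAbove (Set.finite_range _)) i) w
    have h2 := dot_gram v w
    have h3 : w ⬝ᵥ w = S := by
      simp [dotProduct, hS, pow_two]
    rw [h2, h3] at h1
    exact h1
  have hS0 : 0 ≤ S := Finset.sum_nonneg fun i _ => sq_nonneg _
  have hr0 : (0:ℝ) ≤ ⟪r, r⟫ := real_inner_self_nonneg
  have hlam0 := lamMax_nonneg v
  rw [hru] at hcs
  rcases eq_or_lt_of_le hS0 with h | h
  · rw [hS, ← h] at *; linarith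
  · have huu0 : (0:ℝ) ≤ ⟪u, u⟫ := real_inner_self_nonneg
    nlinarith [hcs, huu, mul_le_mul_of_nonneg_right hr huu0, h]

lemma exists_attain {m : ℕ} (v : Fin m → E3) [NeZero m] (hli : LinearIndependent ℝ v) :
    ∃ r : E3, ⟪r, r⟫ = 1 ∧ ∑ i, ⟪v i, r⟫ ^ 2 = lamMax v := by
  obtain ⟨lam, w, hlam, hev, hunit⟩ := exists_top_eigenvector (gram v) (gram_isHermitian v)
  set u : E3 := ∑ j, w j • v j with hu
  have huu : ⟪u, u⟫ = lam := by
    rw [← dot_gram v w, hev, dotProduct_smul, smul_eq_mul, hunit, mul_one]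
  have hwne : w ≠ 0 := by
    intro h0
    rw [h0] at hunit
    simp [dotProduct] at hunit
  have hune : u ≠ 0 := by
    intro h0
    apply hwne
    have := (Fintype.linearIndependent_iff.mp hli) w (by rw [← hu]; exact h0)
    funext i; exact this i
  have hlam_pos : 0 < lam := by
    have : 0 < ⟪u, u⟫ := by
      rcases (real_inner_self_nonneg (x := u)).lt_or_eq with h | h
      · exact h
      · exact absurd (inner_self_eq_zero.mp h.symm) hune
    linarith [huu]
  set s := Real.sqrt lam with hsdef
  have hs : s ^ 2 = lam := Real.sq_sqrt hlam_pos.le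
  have hs0 : s ≠ 0 := by
    intro h0; rw [h0] at hs; simp at hs; linarith
  have hvi : ∀ i, ⟪v i, u⟫ = lam * w i := by
    intro i
    have h1 := gram_mulVec v w i
    rw [hev] at h1
    simpa [Pi.smul_apply, smul_eq_mul] using h1.symm
  refine ⟨s⁻¹ • u, ?_, ?_⟩
  · rw [real_inner_smul_left, real_inner_smul_right, huu, ← hs]
    field_simp
  · have : ∀ i, ⟪v i, s⁻¹ • u⟫ = s⁻¹ * (lam * w i) := by
      intro i; rw [real_inner_smul_right, hvi i]
    simp only [this]
    have hsum : ∑ i, (s⁻¹ * (lam * w i)) ^ 2 = s⁻¹ ^ 2 * lam ^ 2 * ∑ i, w i ^ 2 := by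
      rw [Finset.mul_sum]
      refine Finset.sum_congr rfl fun i _ => ?_
      ring
    have hw2 : ∑ i, w i ^ 2 = 1 := by
      have : w ⬝ᵥ w = ∑ i, w i ^ 2 := by simp [dotProduct, pow_two]
      rw [this] at hunit; exact hunit
    rw [hsum, hw2, mul_one, ← hs, lamMax, ← hlam]
    field_simp
    nlinarith [hs]

lemma inner_expand (a r : E3) : ⟪a, r⟫ = a 0 * r 0 + a 1 * r 1 + a 2 * r 2 := by
  simp [PiLp.inner_apply, RCLike.inner_apply, Fin.sum_univ_three]
  ring

lemma gram_trace_eq (a b c : E3) :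
    (gram ![a, b, c]).trace
      = (a 0^2 + a 1^2 + a 2^2) + (b 0^2 + b 1^2 + b 2^2) + (c 0^2 + c 1^2 + c 2^2) := by
  simp [_root_.gram, Matrix.trace, Fin.sum_univ_three, PiLp.inner_apply, RCLike.inner_apply, pow_two]

/-- the optimal state-independent lower bound for the sum of the variances of
three qubit observables. -/
theorem sum_variances_three_observables_isLeast
    (a0 b0 c0 : ℝ) (a b c : E3) (habc : LinearIndependent ℝ ![a, b, c]) :
    IsLeast {v : ℝ | ∃ ρ : Matrix (Fin 2) (Fin 2) ℂ, IsDensityMatrix ρ ∧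
        v = variance (qObs a0 a) ρ + variance (qObs b0 b) ρ + variance (qObs c0 c) ρ}
      ((gram ![a, b, c]).trace - lamMax ![a, b, c]) := by
  constructor
  · -- membership
    obtain ⟨r, hr1, hr2⟩ := exists_attain ![a, b, c] habc
    have hs1 : (r 0)^2 + (r 1)^2 + (r 2)^2 = 1 := by
      rw [inner_expand] at hr1
      nlinarith [hr1]
    refine ⟨rhoForm (r 0) (r 1) (r 2),
      ⟨rhoForm_posSemidef _ _ _ hs1, rhoForm_trace _ _ _⟩, ?_⟩
    rw [varianceA, varianceA, varianceA, gram_trace_eq]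
    have hsum : ⟪a, r⟫^2 + ⟪b, r⟫^2 + ⟪c, r⟫^2 = lamMax ![a, b, c] := by
      rw [← hr2, Fin.sum_univ_three]
      simp
    rw [inner_expand, inner_expand, inner_expand] at hsum
    linarith [hsum]
  · -- lower bound
    rintro x ⟨ρ, ⟨hpsd, htr1⟩, rfl⟩
    obtain ⟨p, q, t, hs, rfl⟩ := rho_eq_form ρ hpsd htr1
    rw [varianceA, varianceA, varianceA, gram_trace_eq]
    set r : E3 := (WithLp.equiv 2 (Fin 3 → ℝ)).symm ![p, q, t] with hrdef
    have hr0 : r 0 = p := rfl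
    have hr1 : r 1 = q := rfl
    have hr2 : r 2 = t := rfl
    have hrin : ⟪r, r⟫ ≤ 1 := by
      rw [inner_expand, hr0, hr1, hr2]
      nlinarith [hs]
    have hb := sum_inner_sq_le ![a, b, c] r hrin
    rw [Fin.sum_univ_three] at hb
    simp only [Matrix.cons_val_zero, Matrix.cons_val_one, Matrix.head_cons,
      Matrix.cons_val_two, Matrix.tail_cons] at hb
    rw [inner_expand, inner_expand, inner_expand, hr0, hr1, hr2] at hb
    linarith [hb]

end
end
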